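/- Existence and uniqueness of the probabilistic potential: there is a unique function $\mathcal{P}$ on probabilistic TU games with $\mathcal{P}(\emptyset,v,\cdot)=0$ such that $\sum_{i\in N}\big(\mathcal{P}(N,v,p^N)-\mathcal{P}(N\setminus i,v,p^{N\setminus i}_{-i})\big)=\mathbb{E}(N,v,p^N)$ for all $(N,v,p^N)$; moreover $\mathcal{P}(N,v,p^N)=\frac{1}{|N|}\big(\mathbb{E}(N,v,p^N)+\sum_{i\in N}\mathcal{P}(N\setminus i,v,p^{N\setminus i}_{-i})\big)$. -/

import Mathlib

open Finset

variable {α : Type*} [DecidableEq α]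

/-- Harsanyi dividend (closed form). -/
noncomputable def dividend (v : Finset α → ℝ) (S : Finset α) : ℝ :=
  ∑ T ∈ S.powerset, (-1 : ℝ) ^ (S.card - T.card) * v T

/-- Shapley value of player `i` in the game `(S, v)`. -/
noncomputable def shapley (v : Finset α → ℝ) (S : Finset α) (i : α) : ℝ :=
  ∑ T ∈ S.powerset, if i ∈ T then dividend v T / (T.card : ℝ) else 0

/-- Expected worth of a probabilistic TU game `(N, v, p)`. -/
noncomputable def expWorth (N : Finset α) (v p : Finset α → ℝ) : ℝ :=
  ∑ S ∈ N.powerset, p S * v S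

/-- The Expected Shapley value. -/
noncomputable def expShapley (N : Finset α) (v p : Finset α → ℝ) (i : α) : ℝ :=
  ∑ S ∈ N.powerset, if i ∈ S then p S * shapley v S i else 0

/-- Restriction `p_{-i}` of a coalition formation probability distribution. -/
noncomputable def pMinus (p : Finset α → ℝ) (i : α) (S : Finset α) : ℝ :=
  if i ∈ S then 0 else p S + p (insert i S)

/-- Restriction `p^N_M` of a coalition formation probability distribution on `2^N` to `M`. -/
noncomputable def pRestrict (N M : Finset α) (p : Finset α → ℝ) (S : Finset α) : ℝ :=
  if S ⊆ M then ∑ T ∈ (N \ M).powerset, p (S ∪ T) else 0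

/-- `p^N_M(M) = ∑_{K ⊆ N \ M} p (M ∪ K)`. -/
noncomputable def pBar (N : Finset α) (p : Finset α → ℝ) (M : Finset α) : ℝ :=
  ∑ K ∈ (N \ M).powerset, p (M ∪ K)

/-- Unanimity game `u_T`. -/
noncomputable def uGame (T S : Finset α) : ℝ := if T ⊆ S then 1 else 0

/-- `p` is a probability distribution over the coalitions of `N`. -/
def IsDist (N : Finset α) (p : Finset α → ℝ) : Prop :=
  (∀ S, 0 ≤ p S) ∧ (∀ S, ¬ S ⊆ N → p S = 0) ∧ (∑ S ∈ N.powerset, p S = 1)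


noncomputable def pot (N : Finset α) (v p : Finset α → ℝ) : ℝ :=
  if h : N = ∅ then 0 else
    (1 / (N.card : ℝ)) *
      (expWorth N v p + ∑ i ∈ N.attach, pot (N.erase i.1) v (pMinus p i.1))
termination_by N.card
decreasing_by exact Finset.card_erase_lt_of_mem i.2

lemma pot_empty (v q : Finset α → ℝ) : pot (∅ : Finset α) v q = 0 := by
  rw [pot]; simp

lemma pot_rec {N : Finset α} (h : N ≠ ∅) (v p : Finset α → ℝ) :
    pot N v p = (1 / (N.card : ℝ)) *
      (expWorth N v p + ∑ i ∈ N, pot (N.erase i) v (pMinus p i)) := by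
  rw [pot, dif_neg h, ← Finset.sum_attach N fun i => pot (N.erase i) v (pMinus p i)]

lemma expWorth_empty {v : Finset α → ℝ} (p : Finset α → ℝ) (hv : v ∅ = 0) :
    expWorth (∅ : Finset α) v p = 0 := by
  simp [expWorth, hv]

lemma isDist_pMinus {N : Finset α} {p : Finset α → ℝ} (h : IsDist N p) {i : α}
    (hi : i ∈ N) : IsDist (N.erase i) (pMinus p i) := by
  obtain ⟨h0, hz, hs⟩ := h
  refine ⟨fun S => ?_, fun S hS => ?_, ?_⟩
  · unfold pMinus; split
    · exact le_refl 0
    · exact add_nonneg (h0 _) (h0 _)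
  · unfold pMinus; split
    · rfl
    · rename_i hiS
      have hSN : ¬ S ⊆ N := fun hc => hS (Finset.subset_erase.2 ⟨hc, hiS⟩)
      rw [hz S hSN, hz (insert i S) (fun hc => hSN ((Finset.subset_insert i S).trans hc)),
        add_zero]
  · have hni : i ∉ N.erase i := Finset.notMem_erase i N
    have key : ∑ S ∈ (N.erase i).powerset, pMinus p i S
        = ∑ S ∈ (N.erase i).powerset, (p S + p (insert i S)) := by
      refine Finset.sum_congr rfl fun S hS => ?_
      have : i ∉ S := fun hc => hni (Finset.mem_powerset.1 hS hc)
      simp [pMinus, this]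
    rw [key, Finset.sum_add_distrib, ← Finset.sum_powerset_insert hni,
      Finset.insert_erase hi]
    exact hs

lemma key_eq {P : Finset α → (Finset α → ℝ) → (Finset α → ℝ) → ℝ}
    (hrec : ∀ N v p, IsDist N p → v ∅ = 0 →
      ∑ i ∈ N, (P N v p - P (N.erase i) v (pMinus p i)) = expWorth N v p)
    {N : Finset α} (hN : N ≠ ∅) (v p : Finset α → ℝ) (hp : IsDist N p) (hv : v ∅ = 0) :
    P N v p = (1 / (N.card : ℝ)) *
      (expWorth N v p + ∑ i ∈ N, P (N.erase i) v (pMinus p i)) := by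
  have h := hrec N v p hp hv
  rw [Finset.sum_sub_distrib, Finset.sum_const, nsmul_eq_mul] at h
  have hc : (N.card : ℝ) ≠ 0 := by
    simpa using Finset.card_ne_zero.2 (Finset.nonempty_iff_ne_empty.2 hN)
  field_simp
  linarith

lemma pot_spec : ∀ (N : Finset α) (v p), IsDist N p → v ∅ = 0 →
    ∑ i ∈ N, (pot N v p - pot (N.erase i) v (pMinus p i)) = expWorth N v p := by
  intro N v p hp hv
  rcases eq_or_ne N ∅ with rfl | hN
  · simp [expWorth_empty p hv]
  · have hc : (N.card : ℝ) ≠ 0 := by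
      simpa using Finset.card_ne_zero.2 (Finset.nonempty_iff_ne_empty.2 hN)
    rw [Finset.sum_sub_distrib, Finset.sum_const, nsmul_eq_mul, pot_rec hN]
    field_simp
    ring

/-- Existence and uniqueness of the probabilistic potential, together with its
recursive formula. -/
theorem probabilistic_potential_exists_unique :
    (∃ P : Finset α → (Finset α → ℝ) → (Finset α → ℝ) → ℝ,
      (∀ v q, P ∅ v q = 0) ∧
      (∀ N v p, IsDist N p → v ∅ = 0 →
        ∑ i ∈ N, (P N v p - P (N.erase i) v (pMinus p i)) = expWorth N v p)) ∧
    (∀ P Q : Finset α → (Finset α → ℝ) → (Finset α → ℝ) → ℝ,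
      (∀ v q, P ∅ v q = 0) →
      (∀ N v p, IsDist N p → v ∅ = 0 →
        ∑ i ∈ N, (P N v p - P (N.erase i) v (pMinus p i)) = expWorth N v p) →
      (∀ v q, Q ∅ v q = 0) →
      (∀ N v p, IsDist N p → v ∅ = 0 →
        ∑ i ∈ N, (Q N v p - Q (N.erase i) v (pMinus p i)) = expWorth N v p) →
      ∀ N v p, IsDist N p → v ∅ = 0 → P N v p = Q N v p) ∧
    (∀ P : Finset α → (Finset α → ℝ) → (Finset α → ℝ) → ℝ,
      (∀ v q, P ∅ v q = 0) →
      (∀ N v p, IsDist N p → v ∅ = 0 →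
        ∑ i ∈ N, (P N v p - P (N.erase i) v (pMinus p i)) = expWorth N v p) →
      ∀ N v p, N ≠ ∅ → IsDist N p → v ∅ = 0 →
        P N v p = (1 / (N.card : ℝ)) *
          (expWorth N v p + ∑ i ∈ N, P (N.erase i) v (pMinus p i))) := by
  have uniq : ∀ P Q : Finset α → (Finset α → ℝ) → (Finset α → ℝ) → ℝ,
      (∀ v q, P ∅ v q = 0) →
      (∀ N v p, IsDist N p → v ∅ = 0 →
        ∑ i ∈ N, (P N v p - P (N.erase i) v (pMinus p i)) = expWorth N v p) →
      (∀ v q, Q ∅ v q = 0) →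
      (∀ N v p, IsDist N p → v ∅ = 0 →
        ∑ i ∈ N, (Q N v p - Q (N.erase i) v (pMinus p i)) = expWorth N v p) →
      ∀ N v p, IsDist N p → v ∅ = 0 → P N v p = Q N v p := by
    intro P Q hP0 hPrec hQ0 hQrec N
    induction N using Finset.strongInduction with
    | _ N ih =>
      intro v p hp hv
      rcases eq_or_ne N ∅ with rfl | hN
      · rw [hP0, hQ0]
      · rw [key_eq hPrec hN v p hp hv, key_eq hQrec hN v p hp hv]
        congr 1
        congr 1
        refine Finset.sum_congr rfl fun i hi => ?_
        exact ih (N.erase i) (Finset.erase_ssubset hi) v (pMinus p i)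
          (isDist_pMinus hp hi) hv
  refine ⟨⟨pot, pot_empty, pot_spec⟩, uniq, ?_⟩
  intro P hP0 hPrec N v p hN hp hv
  exact key_eq hPrec hN v p hp hv
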